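/- arXiv:1303.1005 — 3 statements merged into one kernel-verified Lean document; each statement's English description precedes it below -/
import Mathlib

section
/- Let k be a nonreal field of characteristic ≠ 2 and let F_n = k((t_1,…,t_n)) be the Laurent series field in n ≥ 1 variables over k. Then s(F_n) = s(k) and p(F_n) = s(k) + 1 = p(F_n(t)), where F_n(t) is the rational function field in one variable over F_n. -/
noncomputable section

/-- `a` is a sum of `n` squares in the commutative ring `A`. -/
def SumOfSquares {A : Type*} [CommRing A] (n : ℕ) (a : A) : Prop :=
  ∃ x : Fin n → A, a = ∑ i, x i ^ 2

/-- The level `s(A)`: the least `n` such that `-1` is a sum of `n` squares (`⊤` if none). -/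
def levelE (A : Type*) [CommRing A] : ℕ∞ :=
  ⨅ (n : ℕ) (_ : SumOfSquares n (-1 : A)), (n : ℕ∞)

/-- The Pythagoras number `p(A)`: the least `n ≥ 1` such that every sum of squares in `A`
is a sum of `n` squares (`⊤` if none). -/
def pythagorasNumber (A : Type*) [CommRing A] : ℕ∞ :=
  ⨅ (n : ℕ) (_ : 1 ≤ n ∧ ∀ a : A, (∃ m, SumOfSquares m a) → SumOfSquares n a), (n : ℕ∞)

/-- A field is (formally) real if `-1` is not a sum of squares. -/
def IsRealField (K : Type*) [Field K] : Prop := ∀ n, ¬ SumOfSquares n (-1 : K)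

/-- The iterated power series ring `k[[t₁,…,t_n]] = k[[t₁,…,t_{n-1}]][[t_n]]`
(`IterPS k 0 = k`). -/
def IterPS (k : Type) : ℕ → Type
  | 0 => k
  | n + 1 => PowerSeries (IterPS k n)

instance IterPS.instCommRing (k : Type) [CommRing k] : ∀ n, CommRing (IterPS k n)
  | 0 => inferInstanceAs (CommRing k)
  | n + 1 =>
    letI := IterPS.instCommRing k n
    inferInstanceAs (CommRing (PowerSeries (IterPS k n)))

instance IterPS.instIsDomain (k : Type) [CommRing k] [IsDomain k] :
    ∀ n, IsDomain (IterPS k n)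
  | 0 => inferInstanceAs (IsDomain k)
  | n + 1 =>
    letI := IterPS.instIsDomain k n
    inferInstanceAs (IsDomain (PowerSeries (IterPS k n)))

/-! ### Auxiliary lemmas on sums of squares -/

open Finset

lemma sumOfSquares_of_finset {A : Type*} [CommRing A] {ι : Type*} [DecidableEq ι]
    {s : Finset ι} {f : ι → A} {n : ℕ} (h : s.card ≤ n) :
    SumOfSquares n (∑ i ∈ s, f i ^ 2) := by
  classical
  set e := s.equivFin
  refine ⟨fun j => if hj : (j : ℕ) < s.card then f (e.symm ⟨j, hj⟩) else 0, ?_⟩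
  have h1 : ∑ i ∈ s, f i ^ 2 = ∑ j : Fin s.card, f (e.symm j) ^ 2 := by
    rw [← Equiv.sum_comp e (fun j => f (e.symm j) ^ 2)]
    simp [Finset.sum_attach s (fun i => f i ^ 2)]
  rw [h1]
  set g : ℕ → A := fun j => (if hj : j < s.card then f (e.symm ⟨j, hj⟩) else 0) ^ 2 with hg
  have h2 : ∀ j : Fin s.card, f (e.symm j) ^ 2 = g j.val := by
    intro j
    rw [hg]
    simp only [j.isLt, dif_pos, Fin.eta]
  calc ∑ j : Fin s.card, f (e.symm j) ^ 2 = ∑ j : Fin s.card, g j.val := by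
        exact Finset.sum_congr rfl fun j _ => h2 j
    _ = ∑ j ∈ Finset.range s.card, g j := Fin.sum_univ_eq_sum_range g s.card
    _ = ∑ j ∈ Finset.range n, g j := by
        refine Finset.sum_subset (Finset.range_subset_range.2 h) ?_
        intro j _ hj
        rw [Finset.mem_range] at hj
        simp [hg, hj]
    _ = ∑ j : Fin n, g j.val := (Fin.sum_univ_eq_sum_range g n).symm

lemma SumOfSquares.mono {A : Type*} [CommRing A] {m n : ℕ} {a : A}
    (h : SumOfSquares m a) (hmn : m ≤ n) : SumOfSquares n a := by
  classical
  obtain ⟨x, rfl⟩ := h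
  have : ∑ i, x i ^ 2 = ∑ i ∈ (univ : Finset (Fin m)), x i ^ 2 := rfl
  rw [this]
  exact sumOfSquares_of_finset (by simpa using hmn)

lemma SumOfSquares.map {A B : Type*} [CommRing A] [CommRing B] (g : A →+* B) {n : ℕ} {a : A}
    (h : SumOfSquares n a) : SumOfSquares n (g a) := by
  obtain ⟨x, rfl⟩ := h
  exact ⟨fun i => g (x i), by simp [map_sum, map_pow]⟩

lemma neg_one_sos_of_sum_sq_zero {K : Type*} [Field K] {ι : Type*} [DecidableEq ι]
    {s : Finset ι} {c : ι → K} (h : ∑ i ∈ s, c i ^ 2 = 0) {i0 : ι} (hi0 : i0 ∈ s)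
    (hc : c i0 ≠ 0) {n : ℕ} (hcard : s.card - 1 ≤ n) : SumOfSquares n (-1 : K) := by
  have herase : ∑ i ∈ s.erase i0, c i ^ 2 = - (c i0 ^ 2) := by
    have := Finset.add_sum_erase s (fun i => c i ^ 2) hi0
    rw [h] at this
    linear_combination this
  have key : (-1 : K) = ∑ i ∈ s.erase i0, (c i / c i0) ^ 2 := by
    have : ∑ i ∈ s.erase i0, (c i / c i0) ^ 2 = (∑ i ∈ s.erase i0, c i ^ 2) / c i0 ^ 2 := by
      rw [Finset.sum_div]
      apply Finset.sum_congr rfl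
      intro i _
      field_simp
    rw [this, herase, neg_div, div_self (pow_ne_zero _ hc)]
  rw [key]
  exact sumOfSquares_of_finset (le_trans (by rw [Finset.card_erase_of_mem hi0]) hcard)

/-! ### The key valuation-theoretic lemma for Laurent series -/

open HahnSeries

lemma laurent_key {K : Type*} [Field K] {m : ℕ} {x : Fin m → LaurentSeries K} {y : LaurentSeries K}
    (hy : y ≠ 0) (hsum : y = ∑ i, x i ^ 2) :
    SumOfSquares (m - 1) (-1 : K) ∨ (Even y.order ∧ SumOfSquares m (y.coeff y.order)) := by
  classical
  set T : Finset (Fin m) := univ.filter (fun i => x i ≠ 0) with hT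
  have hTne : T.Nonempty := by
    by_contra h
    rw [Finset.not_nonempty_iff_eq_empty] at h
    apply hy
    rw [hsum]
    apply Finset.sum_eq_zero
    intro i _
    have hxi : x i = 0 := by
      by_contra hxi
      have hmem : i ∈ T := Finset.mem_filter.2 ⟨Finset.mem_univ i, hxi⟩
      simp [h] at hmem
    simp [hxi]
  set v : ℤ := (T.image fun i => (x i).order).min' (hTne.image _) with hv
  have hvle : ∀ i ∈ T, v ≤ (x i).order := fun i hi =>
    Finset.min'_le _ _ (Finset.mem_image_of_mem _ hi)
  obtain ⟨i0, hi0T, hi0v⟩ : ∃ i ∈ T, (x i).order = v := by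
    have := (T.image fun i => (x i).order).min'_mem (hTne.image _)
    rw [Finset.mem_image] at this
    obtain ⟨i, hi, hiv⟩ := this
    exact ⟨i, hi, hiv⟩
  set S : Finset (Fin m) := T.filter (fun i => (x i).order = v) with hS
  have hi0S : i0 ∈ S := Finset.mem_filter.2 ⟨hi0T, hi0v⟩
  have hxi0 : x i0 ≠ 0 := by simpa [hT] using hi0T
  have h1 : ∀ i : Fin m, (x i ^ 2).coeff (v + v) = if i ∈ S then ((x i).coeff v) ^ 2 else 0 := by
    intro i
    by_cases hxi : x i = 0
    · have hiS : i ∉ S := fun hmem => (Finset.mem_filter.1 (Finset.mem_filter.1 hmem).1).2 hxi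
      simp [hxi, hiS]
    · by_cases hov : (x i).order = v
      · have hiS : i ∈ S := Finset.mem_filter.2 ⟨Finset.mem_filter.2 ⟨Finset.mem_univ i, hxi⟩, hov⟩
        rw [if_pos hiS, pow_two, pow_two]
        have h2 := HahnSeries.coeff_mul_order_add_order (x i) (x i)
        rw [HahnSeries.leadingCoeff_eq, hov] at h2
        exact h2
      · have hiT : i ∈ T := Finset.mem_filter.2 ⟨Finset.mem_univ i, hxi⟩
        have hlt : v < (x i).order := lt_of_le_of_ne (hvle i hiT) (Ne.symm hov)
        have horder : v + v < (x i ^ 2).order := by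
          rw [pow_two, HahnSeries.order_mul hxi hxi]
          exact add_lt_add hlt hlt
        have hiS : i ∉ S := fun hmem => hov (Finset.mem_filter.1 hmem).2
        rw [if_neg hiS, HahnSeries.coeff_eq_zero_of_lt_order horder]
  have hcoeff : y.coeff (v + v) = ∑ i ∈ S, ((x i).coeff v) ^ 2 := by
    calc y.coeff (v + v) = ∑ i, (x i ^ 2).coeff (v + v) := by
          rw [hsum]
          exact map_sum (HahnSeries.coeff.addMonoidHom (v + v)) _ _
      _ = ∑ i, if i ∈ S then ((x i).coeff v) ^ 2 else 0 := Finset.sum_congr rfl fun i _ => h1 i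
      _ = ∑ i ∈ S, ((x i).coeff v) ^ 2 := by rw [Finset.sum_ite_mem]; simp
  have hci0 : (x i0).coeff v ≠ 0 := by
    rw [← hi0v]
    exact fun h => hxi0 (HahnSeries.coeff_order_eq_zero.1 h)
  by_cases h0 : ∑ i ∈ S, ((x i).coeff v) ^ 2 = 0
  · left
    refine neg_one_sos_of_sum_sq_zero h0 hi0S hci0 ?_
    have hScard : S.card ≤ m := le_trans (Finset.card_le_card (Finset.filter_subset _ _))
      (by simpa using Finset.card_filter_le (univ : Finset (Fin m)) _)
    exact Nat.sub_le_sub_right hScard 1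
  · right
    have hyc : y.coeff (v + v) ≠ 0 := by rw [hcoeff]; exact h0
    have hzero : ∀ g : ℤ, g < v + v → y.coeff g = 0 := by
      intro g hg
      rw [hsum]
      rw [show (∑ i, x i ^ 2 : LaurentSeries K).coeff g = ∑ i, (x i ^ 2).coeff g from
        map_sum (HahnSeries.coeff.addMonoidHom g) _ _]
      apply Finset.sum_eq_zero
      intro i _
      by_cases hxi : x i = 0
      · simp [hxi]
      · apply HahnSeries.coeff_eq_zero_of_lt_order
        have hiT : i ∈ T := Finset.mem_filter.2 ⟨Finset.mem_univ i, hxi⟩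
        calc g < v + v := hg
          _ ≤ (x i).order + (x i).order := add_le_add (hvle i hiT) (hvle i hiT)
          _ = (x i ^ 2).order := by rw [pow_two, HahnSeries.order_mul hxi hxi]
    have hord : y.order = v + v := by
      apply le_antisymm (HahnSeries.order_le_of_coeff_ne_zero hyc)
      by_contra hlt
      push_neg at hlt
      exact hy (HahnSeries.coeff_order_eq_zero.1 (hzero _ hlt))
    refine ⟨hord ▸ ⟨v, rfl⟩, ?_⟩
    rw [hord, hcoeff]
    have hScard : S.card ≤ m := le_trans (Finset.card_le_card (Finset.filter_subset _ _))
      (by simpa using Finset.card_filter_le (univ : Finset (Fin m)) _)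
    exact sumOfSquares_of_finset hScard

lemma laurent_neg_one {K : Type*} [Field K] {m : ℕ}
    (h : SumOfSquares m (-1 : LaurentSeries K)) : SumOfSquares m (-1 : K) := by
  obtain ⟨x, hx⟩ := h
  have hne : (-1 : LaurentSeries K) ≠ 0 := by simp
  rcases laurent_key hne hx with h1 | ⟨_, h2⟩
  · exact h1.mono (Nat.sub_le m 1)
  · have ho : (-1 : LaurentSeries K).order = 0 := by
      rw [HahnSeries.order_neg, HahnSeries.order_one]
    rw [ho] at h2
    simpa using h2

lemma laurent_X {K : Type*} [Field K] {m : ℕ}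
    (h : SumOfSquares m (HahnSeries.single (1 : ℤ) (1 : K) : LaurentSeries K)) :
    SumOfSquares (m - 1) (-1 : K) := by
  obtain ⟨x, hx⟩ := h
  have hne : (HahnSeries.single (1 : ℤ) (1 : K) : LaurentSeries K) ≠ 0 :=
    HahnSeries.single_ne_zero one_ne_zero
  rcases laurent_key hne hx with h1 | ⟨he, _⟩
  · exact h1
  · rw [HahnSeries.order_single one_ne_zero] at he
    exact absurd he (by decide)

lemma sos_of_level {K : Type*} [Field K] (h2 : (2 : K) ≠ 0) {s : ℕ}
    (hs : SumOfSquares s (-1 : K)) (a : K) : SumOfSquares (s + 1) a := by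
  obtain ⟨c, hc⟩ := hs
  refine ⟨Fin.cons ((a + 1) / 2) (fun i => c i * ((a - 1) / 2)), ?_⟩
  rw [Fin.sum_univ_succ]
  simp only [Fin.cons_zero, Fin.cons_succ]
  have : ∑ i : Fin s, (c i * ((a - 1) / 2)) ^ 2 = (∑ i, c i ^ 2) * ((a - 1) / 2) ^ 2 := by
    rw [Finset.sum_mul]
    exact Finset.sum_congr rfl fun i _ => by ring
  rw [this, ← hc]
  field_simp
  ring

lemma iInf_nat_eq {P : ℕ → Prop} {s : ℕ} (hs : P s) (hmin : ∀ m, P m → s ≤ m) :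
    (⨅ (n : ℕ) (_ : P n), (n : ℕ∞)) = s := by
  apply le_antisymm
  · exact iInf₂_le s hs
  · exact le_iInf₂ fun n hn => by exact_mod_cast hmin n hn

/-! ### Iterated Laurent series and the embeddings -/

/-- Iterated Laurent series field `k((t₁))((t₂))⋯((t_n))`, bundled with its field structure. -/
def IterLAux (k : Type) [Field k] : ℕ → (L : Type) × Field L
  | 0 => ⟨k, ‹_›⟩
  | n + 1 =>
    letI : Field (IterLAux k n).1 := (IterLAux k n).2
    ⟨LaurentSeries (IterLAux k n).1, inferInstance⟩

/-- Iterated Laurent series field `k((t₁))((t₂))⋯((t_n))`. -/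
def IterL (k : Type) [Field k] (n : ℕ) : Type := (IterLAux k n).1

instance IterL.instField (k : Type) [Field k] (n : ℕ) : Field (IterL k n) := (IterLAux k n).2

lemma two_ne_zero_map {K L : Type*} [Field K] [Field L] (g : K →+* L) (h2 : (2 : K) ≠ 0) :
    (2 : L) ≠ 0 := by
  have hg2 : g 2 = 2 := map_ofNat g 2
  rw [← hg2]
  exact fun h => h2 (g.injective (by rw [h, map_zero]))

lemma SumOfSquares.map_neg_one {A B : Type*} [CommRing A] [CommRing B] (g : A →+* B) {n : ℕ}
    (h : SumOfSquares n (-1 : A)) : SumOfSquares n (-1 : B) := by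
  have := h.map g
  rwa [map_neg, map_one] at this

lemma psmap_injective {R S : Type*} [CommSemiring R] [CommSemiring S] {f : R →+* S}
    (hf : Function.Injective f) : Function.Injective (PowerSeries.map f) := by
  intro p q h
  ext n
  apply hf
  rw [← PowerSeries.coeff_map, ← PowerSeries.coeff_map, h]

/-- The canonical embedding `k[[t₁,…,t_n]] → k((t₁))⋯((t_n))`. -/
def gPS (k : Type) [Field k] : ∀ n, IterPS k n →+* IterL k n
  | 0 => RingHom.id k
  | n + 1 => (HahnSeries.ofPowerSeries ℤ (IterL k n)).comp (PowerSeries.map (gPS k n))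

lemma gPS_injective (k : Type) [Field k] : ∀ n, Function.Injective (gPS k n)
  | 0 => fun _ _ h => h
  | n + 1 => by
    have h1 := gPS_injective k n
    show Function.Injective
      ((HahnSeries.ofPowerSeries ℤ (IterL k n)).comp (PowerSeries.map (gPS k n)))
    rw [RingHom.coe_comp]
    exact HahnSeries.ofPowerSeries_injective.comp (psmap_injective h1)

lemma gPS_X (k : Type) [Field k] (n : ℕ) :
    gPS k (n + 1) (PowerSeries.X : PowerSeries (IterPS k n)) =
      (HahnSeries.single (1 : ℤ) (1 : IterL k n) : LaurentSeries (IterL k n)) := by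
  show (HahnSeries.ofPowerSeries ℤ (IterL k n)).comp (PowerSeries.map (gPS k n))
      PowerSeries.X = _
  rw [RingHom.comp_apply, PowerSeries.map_X, HahnSeries.ofPowerSeries_X]

/-- The embedding of `k((t₁,…,t_n)) = Frac k[[t₁,…,t_n]]` into the iterated Laurent series. -/
def emb (k : Type) [Field k] (n : ℕ) : FractionRing (IterPS k n) →+* IterL k n :=
  IsFractionRing.lift (gPS_injective k n)

lemma emb_algebraMap (k : Type) [Field k] (n : ℕ) (r : IterPS k n) :
    emb k n (algebraMap (IterPS k n) (FractionRing (IterPS k n)) r) = gPS k n r :=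
  IsFractionRing.lift_algebraMap _ _

lemma iterL_neg_one (k : Type) [Field k] :
    ∀ n, ∀ m, SumOfSquares m (-1 : IterL k n) → SumOfSquares m (-1 : k)
  | 0 => fun _ h => h
  | n + 1 => fun m h => iterL_neg_one k n m (laurent_neg_one (K := IterL k n) h)

/-- The constant embedding `k → k[[t₁,…,t_n]]`. -/
def ck (k : Type) [Field k] : ∀ n, k →+* IterPS k n
  | 0 => RingHom.id k
  | n + 1 => (PowerSeries.C (R := IterPS k n)).comp (ck k n)

/-- Let `k` be a nonreal field of characteristic ≠ 2 and
`Fₙ = k((t₁,…,t_n))` the Laurent series field in `n ≥ 1` variables over `k`.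
Then `s(Fₙ) = s(k)` and `p(Fₙ) = s(k) + 1 = p(Fₙ(t))`. -/
theorem stmt_0 (k : Type) [Field k] (h2 : (2 : k) ≠ 0) (hk : ¬ IsRealField k)
    (n : ℕ) (hn : 1 ≤ n) :
    levelE (FractionRing (IterPS k n)) = levelE k ∧
    pythagorasNumber (FractionRing (IterPS k n)) = levelE k + 1 ∧
    pythagorasNumber (RatFunc (FractionRing (IterPS k n))) = levelE k + 1 := by
  classical
  obtain ⟨p, rfl⟩ : ∃ p, n = p + 1 := ⟨n - 1, (Nat.succ_pred_eq_of_pos hn).symm⟩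
  clear hn
  -- the level of k
  have hex : ∃ m, SumOfSquares m (-1 : k) := by
    by_contra h
    push_neg at h
    exact hk h
  obtain ⟨s, hs, hsmin⟩ : ∃ s, SumOfSquares s (-1 : k) ∧
      ∀ m, SumOfSquares m (-1 : k) → s ≤ m :=
    ⟨Nat.find hex, Nat.find_spec hex, fun m hm => Nat.find_min' hex hm⟩
  have hlevk : levelE k = (s : ℕ∞) := iInf_nat_eq hs hsmin
  set F := FractionRing (IterPS k (p + 1)) with hF
  -- transfer of the level upwards
  have hρ : ∃ ρ : k →+* F, True := ⟨(algebraMap (IterPS k (p + 1)) F).comp (ck k (p + 1)), trivial⟩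
  obtain ⟨ρ, -⟩ := hρ
  have h2F : (2 : F) ≠ 0 := two_ne_zero_map ρ h2
  have hsF : SumOfSquares s (-1 : F) := hs.map_neg_one ρ
  -- transfer of the level downwards
  have hdown : ∀ m, SumOfSquares m (-1 : F) → SumOfSquares m (-1 : k) := by
    intro m h
    exact iterL_neg_one k (p + 1) m (h.map_neg_one (emb k (p + 1)))
  -- the variable t_{p+1} as an element of F
  set tvar : F := algebraMap (IterPS k (p + 1)) F
    (PowerSeries.X : PowerSeries (IterPS k p)) with htvar
  have htv : emb k (p + 1) tvar =
      (HahnSeries.single (1 : ℤ) (1 : IterL k p) : LaurentSeries (IterL k p)) := by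
    rw [htvar]; exact (emb_algebraMap k (p + 1) _).trans (gPS_X k p)
  -- goal 1 : the level of F
  have hlevF : levelE F = (s : ℕ∞) :=
    iInf_nat_eq hsF (fun m hm => hsmin m (hdown m hm))
  refine ⟨by rw [hlevF, hlevk], ?_, ?_⟩
  · -- goal 2 : Pythagoras number of F
    have hP : (1 ≤ s + 1) ∧ ∀ a : F, (∃ m, SumOfSquares m a) → SumOfSquares (s + 1) a :=
      ⟨Nat.succ_le_succ (Nat.zero_le s), fun a _ => sos_of_level h2F hsF a⟩
    have hmin : ∀ m, (1 ≤ m ∧ ∀ a : F, (∃ m', SumOfSquares m' a) → SumOfSquares m a) →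
        s + 1 ≤ m := by
      rintro m ⟨hm1, hm⟩
      have ht : SumOfSquares m tvar := hm tvar ⟨s + 1, sos_of_level h2F hsF tvar⟩
      have h1 := ht.map (emb k (p + 1))
      rw [htv] at h1
      have h3 : SumOfSquares (m - 1) (-1 : IterL k p) := laurent_X h1
      have h4 := hsmin _ (iterL_neg_one k p _ h3)
      omega
    have hpF : pythagorasNumber F = ((s + 1 : ℕ) : ℕ∞) := iInf_nat_eq hP hmin
    rw [hpF, hlevk]
    push_cast
    ring
  · -- goal 3 : Pythagoras number of F(t)
    set ι : F →+* RatFunc F := algebraMap F (RatFunc F) with hι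
    have h2R : (2 : RatFunc F) ≠ 0 := two_ne_zero_map ι h2F
    have hsR : SumOfSquares s (-1 : RatFunc F) := hsF.map_neg_one ι
    have hP : (1 ≤ s + 1) ∧
        ∀ a : RatFunc F, (∃ m, SumOfSquares m a) → SumOfSquares (s + 1) a :=
      ⟨Nat.succ_le_succ (Nat.zero_le s), fun a _ => sos_of_level h2R hsR a⟩
    have hmin : ∀ m,
        (1 ≤ m ∧ ∀ a : RatFunc F, (∃ m', SumOfSquares m' a) → SumOfSquares m a) →
        s + 1 ≤ m := by
      rintro m ⟨hm1, hm⟩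
      have ht : SumOfSquares m (RatFunc.X : RatFunc F) :=
        hm _ ⟨s + 1, sos_of_level h2R hsR _⟩
      open RatFunc in have h1 := ht.map (algebraMap (RatFunc F) (LaurentSeries F))
      open RatFunc in have hX : (algebraMap (RatFunc F) (LaurentSeries F)) (RatFunc.X : RatFunc F) =
          (HahnSeries.single (1 : ℤ) (1 : F) : LaurentSeries F) := RatFunc.coe_X
      rw [hX] at h1
      have h3 : SumOfSquares (m - 1) (-1 : F) := laurent_X h1
      have h4 := hsmin _ (hdown _ h3)
      omega
    have hpR : pythagorasNumber (RatFunc F) = ((s + 1 : ℕ) : ℕ∞) := iInf_nat_eq hP hmin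
    rw [hpR, hlevk]
    push_cast
    ring

end
end

section
/- Let k be a field of characteristic ≠ 2 and consider the rings B := k[[t]][x] ⊆ A := k[x][[t]]. Then every element f ∈ A admits a factorization f = u·g, where u is a unit of A and g ∈ B. -/
noncomputable section

/-- The natural inclusion `B = k[[t]][x] ⊆ A = k[x][[t]]`, sending a power series
coefficient `c(t)` to itself and the variable `x` to `x`. -/
def polyPS (k : Type) [CommRing k] :
    Polynomial (PowerSeries k) →+* PowerSeries (Polynomial k) :=
  Polynomial.eval₂RingHom (PowerSeries.map Polynomial.C)
    (PowerSeries.C (R := Polynomial k) Polynomial.X)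

/-- Auxiliary recursion for Weierstrass-type division. -/
noncomputable def rseq {k : Type} [Field k] (p : Polynomial k) (f : ℕ → Polynomial k) :
    ℕ → Polynomial k
  | 0 => 0
  | (j+1) => f (j+1) - ∑ i ∈ (Finset.range j).attach,
      (rseq p f (i.1+1) /ₘ p) * (rseq p f (j - i.1) %ₘ p)
decreasing_by
  · exact Nat.succ_lt_succ (Finset.mem_range.mp i.2)
  · exact Nat.lt_succ_of_le (Nat.sub_le _ _)

def useq {k : Type} [Field k] (p : Polynomial k) (f : ℕ → Polynomial k) (j : ℕ) : Polynomial k :=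
  if j = 0 then 1 else rseq p f j /ₘ p

def gseq {k : Type} [Field k] (p : Polynomial k) (f : ℕ → Polynomial k) (j : ℕ) : Polynomial k :=
  if j = 0 then p else rseq p f j %ₘ p

theorem key_sum {k : Type} [Field k] (p : Polynomial k) (hp : p.Monic)
    (f : ℕ → Polynomial k) (J : ℕ) :
    ∑ m ∈ Finset.range (J+2), useq p f m * gseq p f (J+1 - m) = f (J+1) := by
  rw [Finset.sum_range_succ, Finset.sum_range_succ']
  have h1 : ∀ m ∈ Finset.range J, useq p f (m+1) * gseq p f (J+1-(m+1)) =
      (rseq p f (m+1) /ₘ p) * (rseq p f (J - m) %ₘ p) := by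
    intro m hm
    have hJm : J - m ≠ 0 := Nat.sub_ne_zero_of_lt (Finset.mem_range.mp hm)
    simp [useq, gseq, hJm]
  rw [Finset.sum_congr rfl h1]
  have h2 : ∑ m ∈ Finset.range J, (rseq p f (m+1) /ₘ p) * (rseq p f (J - m) %ₘ p)
      = f (J+1) - rseq p f (J+1) := by
    rw [show rseq p f (J+1) = f (J+1) - ∑ i ∈ (Finset.range J).attach,
      (rseq p f (i.1+1) /ₘ p) * (rseq p f (J - i.1) %ₘ p) from by rw [rseq]]
    rw [Finset.sum_attach (Finset.range J)
      (fun i => (rseq p f (i+1) /ₘ p) * (rseq p f (J - i) %ₘ p))]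
    ring
  rw [h2]
  have h3 := Polynomial.modByMonic_add_div (rseq p f (J+1)) p
  simp only [useq, gseq, Nat.sub_zero, Nat.sub_self, Nat.succ_ne_zero, if_false, if_true,
    one_mul, if_pos rfl]
  linear_combination h3

/-- natDegree bound for `gseq`. -/
theorem gseq_natDegree_lt {k : Type} [Field k] {p : Polynomial k} (hp : p.Monic)
    (f : ℕ → Polynomial k) (j : ℕ) :
    (gseq p f j).natDegree < p.natDegree + 1 := by
  rcases Nat.eq_zero_or_pos j with hj | hj
  · simp [gseq, hj, Nat.lt_succ_self]
  · have hjne : j ≠ 0 := Nat.pos_iff_ne_zero.mp hj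
    simp only [gseq, if_neg hjne]
    exact Nat.lt_succ_of_le (Polynomial.natDegree_modByMonic_le _ hp)

/-- Key lemma: the monic-constant-coefficient case. -/
theorem key_monic {k : Type} [Field k] (f : PowerSeries (Polynomial k))
    (hp : (PowerSeries.constantCoeff (R := Polynomial k) f).Monic) :
    ∃ (u : (PowerSeries (Polynomial k))ˣ) (g : Polynomial (PowerSeries k)),
      f = u * polyPS k g := by
  set p := PowerSeries.constantCoeff (R := Polynomial k) f with hpdef
  set fc : ℕ → Polynomial k := fun j => PowerSeries.coeff (R := Polynomial k) j f with hfc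
  set U : PowerSeries (Polynomial k) := PowerSeries.mk (useq p fc) with hUdef
  set G : PowerSeries (Polynomial k) := PowerSeries.mk (gseq p fc) with hGdef
  have hU : IsUnit U := by
    rw [PowerSeries.isUnit_iff_constantCoeff]
    have : PowerSeries.constantCoeff (R := Polynomial k) U = 1 := by
      rw [hUdef, ← PowerSeries.coeff_zero_eq_constantCoeff_apply, PowerSeries.coeff_mk]
      simp [useq]
    rw [this]; exact isUnit_one
  have hUG : U * G = f := by
    apply PowerSeries.ext; intro n
    rw [PowerSeries.coeff_mul, Finset.Nat.sum_antidiagonal_eq_sum_range_succ_mk]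
    simp only [hUdef, hGdef, PowerSeries.coeff_mk]
    cases n with
    | zero =>
        rw [Finset.sum_range_one]
        simp only [useq, gseq, if_pos rfl, one_mul, Nat.sub_zero, if_true]
        rw [hpdef, ← PowerSeries.coeff_zero_eq_constantCoeff_apply]
    | succ J =>
      cases J with
      | zero =>
        have := key_sum p hp fc 0
        simpa using this
      | succ J' =>
        have := key_sum p hp fc (J' + 1)
        simpa [Nat.add_assoc] using this
  set d : ℕ := p.natDegree with hd
  set g : Polynomial (PowerSeries k) := ∑ i ∈ Finset.range (d+1),
      Polynomial.C (PowerSeries.mk fun j => (gseq p fc j).coeff i) * Polynomial.X ^ i with hgdef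
  have hg : polyPS k g = G := by
    have hexp : polyPS k g = ∑ i ∈ Finset.range (d+1),
        (PowerSeries.map Polynomial.C (PowerSeries.mk fun j => (gseq p fc j).coeff i)) *
          (PowerSeries.C (R := Polynomial k) Polynomial.X) ^ i := by
      rw [hgdef, map_sum]
      refine Finset.sum_congr rfl fun i _ => ?_
      rw [map_mul, map_pow]
      simp [polyPS]
    apply PowerSeries.ext; intro n
    rw [hexp, map_sum]
    have hterm : ∀ i ∈ Finset.range (d+1),
        PowerSeries.coeff (R := Polynomial k) n
          ((PowerSeries.map Polynomial.C (PowerSeries.mk fun j => (gseq p fc j).coeff i)) *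
            (PowerSeries.C (R := Polynomial k) Polynomial.X) ^ i)
        = Polynomial.C ((gseq p fc n).coeff i) * Polynomial.X ^ i := by
      intro i _
      rw [← map_pow, PowerSeries.coeff_mul_C, PowerSeries.coeff_map, PowerSeries.coeff_mk]
    rw [Finset.sum_congr rfl hterm]
    have := Polynomial.as_sum_range' (gseq p fc n) (d+1) (gseq_natDegree_lt hp fc n)
    rw [hGdef, PowerSeries.coeff_mk]
    conv_rhs => rw [this]
    exact Finset.sum_congr rfl fun i _ => Polynomial.C_mul_X_pow_eq_monomial
  exact ⟨hU.unit, g, by rw [IsUnit.unit_spec, hg, hUG]⟩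

/-- For any field `k` of characteristic ≠ 2 and the natural inclusion
`B = k[[t]][x] ⊆ A = k[x][[t]]`, every `f ∈ A` factors as `f = u·g` with `u ∈ Aˣ`
and `g ∈ B`. -/
theorem stmt_8 (k : Type) [Field k] (h2 : (2 : k) ≠ 0)
    (f : PowerSeries (Polynomial k)) :
    ∃ (u : (PowerSeries (Polynomial k))ˣ) (g : Polynomial (PowerSeries k)),
      f = u * polyPS k g := by
  by_cases hf : f = 0
  · exact ⟨1, 0, by simp [hf]⟩
  -- write f = X^n * f₁ with nonzero constant coefficient
  set n : ℕ := f.order.lift (PowerSeries.order_finite_iff_ne_zero.mpr hf) with hn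
  set f₁ : PowerSeries (Polynomial k) := PowerSeries.divXPowOrder f with hf₁
  have hfX : PowerSeries.X ^ n * f₁ = f :=
    by rw [hn, ENat.lift_eq_toNat_of_lt_top]; exact PowerSeries.X_pow_order_mul_divXPowOrder
  have hc : PowerSeries.constantCoeff (R := Polynomial k) f₁ ≠ 0 := by
    have f_const : PowerSeries.coeff (R := Polynomial k) n f ≠ 0 := by
      rw [hn, ENat.lift_eq_toNat_of_lt_top]; exact PowerSeries.coeff_order hf
    intro h0
    apply f_const
    rw [← hfX]
    have : PowerSeries.coeff (R := Polynomial k) (0 + n) (PowerSeries.X ^ n * f₁) =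
        PowerSeries.coeff (R := Polynomial k) 0 f₁ := PowerSeries.coeff_X_pow_mul f₁ n 0
    rw [zero_add] at this
    rw [this, PowerSeries.coeff_zero_eq_constantCoeff, h0]
  -- normalize to a monic constant coefficient
  set c : k := (PowerSeries.constantCoeff (R := Polynomial k) f₁).leadingCoeff with hcdef
  have hcne : c ≠ 0 := Polynomial.leadingCoeff_ne_zero.mpr hc
  set f₂ : PowerSeries (Polynomial k) :=
    PowerSeries.C (R := Polynomial k) (Polynomial.C c⁻¹) * f₁ with hf₂
  have hmonic : (PowerSeries.constantCoeff (R := Polynomial k) f₂).Monic := by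
    rw [hf₂, map_mul, PowerSeries.constantCoeff_C, mul_comm]
    exact Polynomial.monic_mul_leadingCoeff_inv hc
  obtain ⟨u, g, hug⟩ := key_monic f₂ hmonic
  -- the constant `C c` is a unit in the power series ring
  have hCc : IsUnit (PowerSeries.C (R := Polynomial k) (Polynomial.C c)) := by
    apply IsUnit.map
    exact (Polynomial.isUnit_C).mpr (isUnit_iff_ne_zero.mpr hcne)
  refine ⟨hCc.unit * u, Polynomial.C PowerSeries.X ^ n * g, ?_⟩
  have hX : polyPS k (Polynomial.C PowerSeries.X ^ n * g) =
      PowerSeries.X ^ n * polyPS k g := by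
    rw [map_mul, map_pow]
    congr 1
    congr 1
    simp [polyPS]
  have hback : PowerSeries.C (R := Polynomial k) (Polynomial.C c) * f₂ = f₁ := by
    rw [hf₂, ← mul_assoc, ← map_mul, ← map_mul, mul_inv_cancel₀ hcne]
    simp
  rw [Units.val_mul, IsUnit.unit_spec, hX, ← hfX, ← hback, hug]
  ring
end
end

section
/- Let k be a field of characteristic ≠ 2, R_n = k[[t_1,…,t_n]], and let f ∈ R_n be a power series regular in t_n (i.e. f(0,…,0,t_n) ≠ 0 in k[[t_n]]). Let m ≥ 1 be an integer with m ≤ s(k). If f is a sum of m squares in R_n, then there exist a ∈ R_n and b ∈ R_{n−1}[t_n] such that b is a sum of m squares of elements of R_{n−1}[t_n] and f = a²·b. -/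
noncomputable section

/-- The natural inclusion `k[[t₁,…,t_n]][t_{n+1}] ⊆ k[[t₁,…,t_{n+1}]]`. -/
def polyToPS (k : Type) [CommRing k] (n : ℕ) :
    Polynomial (IterPS k n) →+* IterPS k (n + 1) :=
  Polynomial.coeToPowerSeries.ringHom

/-- Evaluation of an iterated power series at `t₁ = ⋯ = t_n = 0`. -/
def IterPS.evalZero (k : Type) [CommRing k] : ∀ n, IterPS k n →+* k
  | 0 => RingHom.id k
  | n + 1 =>
    (IterPS.evalZero k n).comp
      ((PowerSeries.constantCoeff (R := IterPS k n)) :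
        PowerSeries (IterPS k n) →+* IterPS k n)

open PowerSeries


noncomputable section
namespace WPrep

variable {R : Type*} [CommRing R]

/-- All coefficients of a power series lie in an ideal. -/
def CoeffsIn (K : Ideal R) (h : PowerSeries R) : Prop := ∀ j, PowerSeries.coeff (R := R) j h ∈ K

lemma CoeffsIn.mul {K L : Ideal R} {x y : PowerSeries R} (hx : CoeffsIn K x) (hy : CoeffsIn L y) :
    CoeffsIn (K * L) (x * y) := by
  intro j
  rw [PowerSeries.coeff_mul]
  exact Ideal.sum_mem _ fun p _ => Ideal.mul_mem_mul (hx p.1) (hy p.2)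

lemma CoeffsIn.mul_left {L : Ideal R} {x y : PowerSeries R} (hy : CoeffsIn L y) :
    CoeffsIn L (x * y) := by
  intro j
  rw [PowerSeries.coeff_mul]
  exact Ideal.sum_mem _ fun p _ => Ideal.mul_mem_left _ _ (hy p.2)

lemma CoeffsIn.sub {K : Ideal R} {x y : PowerSeries R} (hx : CoeffsIn K x) (hy : CoeffsIn K y) :
    CoeffsIn K (x - y) := fun j => by
  rw [map_sub]; exact Submodule.sub_mem _ (hx j) (hy j)

/-- The shift operator, dropping the `d` lowest coefficients. -/
def shift (d : ℕ) (h : PowerSeries R) : PowerSeries R := mk fun j => coeff (R := R) (d + j) h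

@[simp] lemma coeff_shift (d j : ℕ) (h : PowerSeries R) :
    coeff (R := R) j (shift d h) = coeff (R := R) (d + j) h := coeff_mk _ _

lemma shift_X_pow_mul (d : ℕ) (h : PowerSeries R) : shift d (X ^ d * h) = h := by
  ext j
  rw [coeff_shift, coeff_X_pow_mul' , if_pos (Nat.le_add_right _ _)]
  simp

lemma shift_sub (d : ℕ) (x y : PowerSeries R) : shift d (x - y) = shift d x - shift d y := by
  ext j; simp

lemma shift_add (d : ℕ) (x y : PowerSeries R) : shift d (x + y) = shift d x + shift d y := by
  ext j; simp

lemma decomp (d : ℕ) (h : PowerSeries R) :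
    h = ((PowerSeries.trunc d h : Polynomial R) : PowerSeries R) + X ^ d * shift d h := by
  ext j
  rw [map_add, Polynomial.coeff_coe, coeff_trunc, coeff_X_pow_mul']
  by_cases hj : j < d
  · rw [if_pos hj, if_neg (by omega)]
    simp
  · rw [if_neg hj, if_pos (by omega), coeff_shift]
    rw [Nat.add_sub_cancel' (by omega)]
    simp

lemma coeffsIn_shift {K : Ideal R} {x : PowerSeries R} (hx : CoeffsIn K x) (d : ℕ) :
    CoeffsIn K (shift d x) := fun j => by rw [coeff_shift]; exact hx _

end WPrep

namespace WPrep

variable {R : Type*} [CommRing R]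

lemma CoeffsIn.add {K : Ideal R} {x y : PowerSeries R} (hx : CoeffsIn K x) (hy : CoeffsIn K y) :
    CoeffsIn K (x + y) := fun j => by
  rw [map_add]; exact Submodule.add_mem _ (hx j) (hy j)

lemma CoeffsIn.neg {K : Ideal R} {x : PowerSeries R} (hx : CoeffsIn K x) :
    CoeffsIn K (-x) := fun j => by
  rw [map_neg]; exact Submodule.neg_mem _ (hx j)

lemma CoeffsIn.mul_right {K : Ideal R} {x y : PowerSeries R} (hx : CoeffsIn K x) :
    CoeffsIn K (x * y) := by
  intro j
  rw [PowerSeries.coeff_mul]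
  exact Ideal.sum_mem _ fun p _ => Ideal.mul_mem_right _ _ (hx p.1)

lemma smul_top_pow (I : Ideal R) (n : ℕ) : (I ^ n • ⊤ : Submodule R R) = I ^ n := by
  rw [smul_eq_mul, Ideal.mul_top]

/-- Weierstrass division, existence part: if `f` has its first `d` coefficients in `I`
and its `d`-th coefficient a unit, then modulo `f`, every power series is a polynomial. -/
theorem wdiv {I : Ideal R} [IsAdicComplete I R] {f : PowerSeries R} {d : ℕ}
    (hlow : ∀ j < d, coeff (R := R) j f ∈ I) (hd : IsUnit (coeff (R := R) d f)) (g : PowerSeries R) :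
    ∃ (q : PowerSeries R) (r : Polynomial R), g = q * f + (r : PowerSeries R) := by
  classical
  set B : PowerSeries R := shift d f with hB
  have hBunit : IsUnit B := by
    rw [PowerSeries.isUnit_iff_constantCoeff]
    simpa [hB, ← PowerSeries.coeff_zero_eq_constantCoeff] using hd
  obtain ⟨Bu, hBu⟩ := hBunit
  set Bi : PowerSeries R := ↑Bu⁻¹ with hBi
  have hBBi : B * Bi = 1 := by rw [← hBu, hBi, Units.mul_inv]
  set A : PowerSeries R := ((PowerSeries.trunc d f : Polynomial R) : PowerSeries R) with hA
  have hAI : CoeffsIn I A := by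
    intro j
    rw [hA, Polynomial.coeff_coe, coeff_trunc]
    split
    · exact hlow _ ‹_›
    · exact Submodule.zero_mem _
  have hfAB : f = A + X ^ d * B := decomp d f
  -- the iteration
  set c : ℕ → PowerSeries R :=
    fun s => Nat.recOn s 0 (fun _ q => Bi * (shift d g - shift d (q * A))) with hc
  have hcsucc : ∀ s, c (s + 1) = Bi * (shift d g - shift d (c s * A)) := fun s => rfl
  have claim1 : ∀ s, CoeffsIn (I ^ s) (c (s + 1) - c s) := by
    intro s
    induction s with
    | zero => intro j; simp [Ideal.one_eq_top]
    | succ s ih =>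
      have key : c (s + 2) - c (s + 1) = Bi * shift d ((c s - c (s + 1)) * A) := by
        simp only [hcsucc, sub_mul, shift_sub]
        ring
      have h1 : CoeffsIn (I ^ s) (c s - c (s + 1)) := by
        have := ih.neg; rwa [neg_sub] at this
      rw [key, pow_succ]
      exact CoeffsIn.mul_left (coeffsIn_shift (h1.mul hAI) d)
  have claim2 : ∀ s, CoeffsIn (I ^ s) (shift d (g - c s * f)) := by
    intro s
    have key : shift d (g - c s * f) = B * (c (s + 1) - c s) := by
      have h1 : B * c (s + 1) = shift d g - shift d (c s * A) := by
        rw [hcsucc, ← mul_assoc, hBBi, one_mul]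
      have h2 : g - c s * f = (g - c s * A) - X ^ d * (c s * B) := by
        rw [hfAB]; ring
      rw [h2, shift_sub, shift_sub, shift_X_pow_mul, ← h1]
      ring
    rw [key]
    exact CoeffsIn.mul_left (claim1 s)
  -- take the limit
  have cauchy : ∀ n m : ℕ, n ≤ m → CoeffsIn (I ^ n) (c m - c n) := by
    intro n m hnm
    induction m, hnm using Nat.le_induction with
    | base => intro j; simp
    | succ m hnm ih =>
      have : c (m + 1) - c n = (c (m + 1) - c m) + (c m - c n) := by ring
      rw [this]
      exact CoeffsIn.add (fun j => Ideal.pow_le_pow_right hnm (claim1 m j)) ih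
  have hL : ∀ j : ℕ, ∃ Lj : R, ∀ n, coeff (R := R) j (c n) ≡ Lj [SMOD (I ^ n • ⊤ : Submodule R R)] := by
    intro j
    apply IsPrecomplete.prec (IsAdicComplete.toIsPrecomplete (I := I))
    intro a b hab
    rw [SModEq.sub_mem, smul_top_pow, ← map_sub]
    have := (cauchy a b hab).neg
    rw [neg_sub] at this
    exact this j
  choose L hLspec using hL
  set Q : PowerSeries R := mk L with hQ
  have hQc : ∀ n, CoeffsIn (I ^ n) (Q - c n) := by
    intro n j
    have := (hLspec j n).symm
    rw [SModEq.sub_mem, smul_top_pow] at this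
    simpa [hQ] using this
  have hvanish : ∀ j, coeff (R := R) j (shift d (g - Q * f)) = 0 := by
    intro j
    apply IsHausdorff.haus (IsAdicComplete.toIsHausdorff (I := I))
    intro s
    rw [SModEq.zero, smul_top_pow]
    have hsQ : CoeffsIn (I ^ s) (c s - Q) := by
      have := (hQc s).neg
      rw [neg_sub] at this
      exact this
    have key : g - Q * f = (g - c s * f) + (c s - Q) * f := by ring
    rw [key, shift_add, map_add]
    exact Submodule.add_mem _ (claim2 s j) (coeffsIn_shift hsQ.mul_right d j)
  refine ⟨Q, PowerSeries.trunc d (g - Q * f), ?_⟩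
  have h0 : shift d (g - Q * f) = 0 := by
    ext j; simpa using hvanish j
  have hdec := decomp d (g - Q * f)
  rw [h0, mul_zero, add_zero] at hdec
  linear_combination hdec

end WPrep

namespace WPrep

variable {R : Type*} [CommRing R] (M : Ideal R)

/-- The ideal of power series whose `i`-th coefficient lies in `M ^ (s - i)` for `i < s`. -/
def Jid (s : ℕ) : Ideal (PowerSeries R) where
  carrier := {f | ∀ i < s, coeff (R := R) i f ∈ M ^ (s - i)}
  add_mem' := fun hx hy i hi => by
    rw [map_add]; exact Submodule.add_mem _ (hx i hi) (hy i hi)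
  zero_mem' := fun i hi => by simp
  smul_mem' := fun c f hf => by
    intro i hi
    rw [smul_eq_mul, coeff_mul]
    refine Ideal.sum_mem _ fun p hp => ?_
    rw [Finset.HasAntidiagonal.mem_antidiagonal] at hp
    refine Ideal.mul_mem_left _ _ (Ideal.pow_le_pow_right ?_ (hf p.2 (by omega)))
    omega

lemma mem_Jid {s : ℕ} {f : PowerSeries R} :
    f ∈ Jid M s ↔ ∀ i < s, coeff (R := R) i f ∈ M ^ (s - i) := Iff.rfl

variable {R : Type*} [CommRing R] (M : Ideal R)

lemma pow_le_Jid (s : ℕ) :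
    (Ideal.comap (constantCoeff (R := R)) M) ^ s ≤ Jid M s := by
  induction s with
  | zero => intro f _ i hi; omega
  | succ s ih =>
    rw [pow_succ]
    refine Ideal.mul_le.mpr fun a ha b hb => ?_
    have haJ := ih ha
    intro i hi
    rw [coeff_mul]
    refine Ideal.sum_mem _ fun p hp => ?_
    rw [Finset.HasAntidiagonal.mem_antidiagonal] at hp
    rcases Nat.eq_zero_or_pos p.2 with h2 | h2
    · -- p = (i, 0)
      have hp1 : p.1 = i := by omega
      have hb0 : coeff (R := R) p.2 b ∈ M := by
        rw [h2, coeff_zero_eq_constantCoeff]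
        exact hb
      have : s + 1 - i = (s - i) + 1 := by omega
      rw [this, pow_succ]
      rcases Nat.lt_or_ge i s with hlt | hge
      · exact Ideal.mul_mem_mul (hp1 ▸ haJ i hlt) hb0
      · have : s - i = 0 := by omega
        rw [this, pow_zero, Ideal.one_eq_top, Ideal.top_mul]
        exact Ideal.mul_mem_left _ _ hb0
    · -- p.2 ≥ 1
      have h1 : p.1 < s := by omega
      refine Ideal.mul_mem_right _ _ (Ideal.pow_le_pow_right ?_ (haJ p.1 h1))
      omega

lemma ps_decomp (s : ℕ) (f : PowerSeries R) :
    f = (∑ i ∈ Finset.range s, PowerSeries.C (R := R) (coeff (R := R) i f) * X ^ i)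
      + X ^ s * shift s f := by
  ext j
  rw [map_add, map_sum, coeff_X_pow_mul']
  by_cases hj : j < s
  · rw [if_neg (by omega), add_zero, Finset.sum_eq_single j]
    · rw [coeff_C_mul_X_pow, if_pos rfl]
    · intro i _ hij
      rw [coeff_C_mul_X_pow, if_neg (fun h => hij h.symm)]
    · intro h
      exact absurd (Finset.mem_range.mpr hj) h
  · rw [if_pos (by omega), coeff_shift, Finset.sum_eq_zero, zero_add,
      Nat.add_sub_cancel' (by omega)]
    intro i hi
    rw [coeff_C_mul_X_pow, if_neg]
    rw [Finset.mem_range] at hi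
    omega

lemma Jid_le_pow (s : ℕ) :
    Jid M s ≤ (Ideal.comap (constantCoeff (R := R)) M) ^ s := by
  intro f hf
  set M' := Ideal.comap (constantCoeff (R := R)) M with hM'
  have hX : (X : PowerSeries R) ∈ M' := by
    simp [hM', Ideal.mem_comap]
  have hCmap : Ideal.map (PowerSeries.C (R := R)) M ≤ M' := by
    rw [Ideal.map_le_iff_le_comap]
    intro a ha
    simpa [hM', Ideal.mem_comap] using ha
  rw [ps_decomp s f]
  refine Submodule.add_mem _ (Ideal.sum_mem _ fun i hi => ?_)
    (Ideal.mul_mem_right _ _ (Ideal.pow_mem_pow hX s))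
  rw [Finset.mem_range] at hi
  have hC : PowerSeries.C (R := R) (coeff (R := R) i f) ∈ M' ^ (s - i) := by
    refine Ideal.pow_right_mono hCmap (s - i) ?_
    rw [← Ideal.map_pow]
    exact Ideal.mem_map_of_mem _ (hf i hi)
  have := Ideal.mul_mem_mul hC (Ideal.pow_mem_pow hX i)
  rwa [← pow_add, Nat.sub_add_cancel hi.le] at this

lemma pow_comap_eq (s : ℕ) :
    (Ideal.comap (constantCoeff (R := R)) M) ^ s = Jid M s :=
  le_antisymm (pow_le_Jid M s) (Jid_le_pow M s)

theorem isAdicComplete_powerSeries [IsAdicComplete M R] :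
    IsAdicComplete (Ideal.comap (constantCoeff (R := R)) M) (PowerSeries R) := by
  set M' := Ideal.comap (constantCoeff (R := R)) M with hM'
  have h1 : IsHausdorff M' (PowerSeries R) := by
    constructor
    intro x hx
    ext i
    rw [map_zero]
    apply IsHausdorff.haus (IsAdicComplete.toIsHausdorff (I := M))
    intro s
    rw [SModEq.zero, smul_top_pow]
    rcases Nat.eq_zero_or_pos s with rfl | hs
    · simp [Ideal.one_eq_top]
    · have hx' := hx (s + i)
      rw [SModEq.zero, smul_top_pow, pow_comap_eq] at hx'
      have := hx' i (by omega)
      simpa [Nat.add_sub_cancel] using this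
  have h2 : IsPrecomplete M' (PowerSeries R) := by
    constructor
    intro f hf
    have key : ∀ i : ℕ, ∃ Li : R, ∀ n, coeff (R := R) i (f (n + i)) ≡ Li
        [SMOD (M ^ n • ⊤ : Submodule R R)] := by
      intro i
      apply IsPrecomplete.prec (IsAdicComplete.toIsPrecomplete (I := M))
      intro a b hab
      rw [SModEq.sub_mem, smul_top_pow, ← map_sub]
      rcases Nat.eq_zero_or_pos a with rfl | ha
      · simp [Ideal.one_eq_top]
      · have h1 := hf (show a + i ≤ b + i by omega)
        rw [SModEq.sub_mem, smul_top_pow, pow_comap_eq] at h1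
        have := h1 i (by omega)
        simpa [Nat.add_sub_cancel] using this
    choose L hL using key
    refine ⟨mk L, fun n => ?_⟩
    rw [SModEq.sub_mem, smul_top_pow, pow_comap_eq]
    intro i hi
    have e1 : coeff (R := R) i (f n - mk L) =
        (coeff (R := R) i (f n) - coeff (R := R) i (f (n - i + i))) + (coeff (R := R) i (f (n - i + i)) - L i) := by
      rw [map_sub]; ring_nf; simp
    rw [e1]
    refine Submodule.add_mem _ ?_ ?_
    · have h1 := hf (show n - i + i ≤ n by omega)
      rw [SModEq.sub_mem, smul_top_pow, pow_comap_eq] at h1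
      have := h1 i (by omega)
      have hrw : n - i + i - i = n - i := by omega
      rw [hrw] at this
      have h2 : coeff (R := R) i (f n - f (n - i + i)) ∈ M ^ (n - i) := by
        have := (Submodule.neg_mem _ this)
        rwa [← map_neg, neg_sub] at this
      rwa [map_sub] at h2
    · have := hL i (n - i)
      rw [SModEq.sub_mem, smul_top_pow] at this
      simpa using this
  exact { h1, h2 with }

end WPrep



noncomputable section IterStuff

open PowerSeries

variable (k : Type) [Field k]

/-- The maximal ideal of `IterPS k N`. -/
def Mi (N : ℕ) : Ideal (IterPS k N) := RingHom.ker (IterPS.evalZero k N)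

lemma evalZero_succ_apply (n : ℕ) (x : IterPS k (n + 1)) :
    IterPS.evalZero k (n + 1) x
      = IterPS.evalZero k n (PowerSeries.constantCoeff (R := IterPS k n) x) := rfl

lemma Mi_succ (n : ℕ) :
    Mi k (n + 1) = Ideal.comap (PowerSeries.constantCoeff (R := IterPS k n)) (Mi k n) := by
  ext x
  simp only [Mi, RingHom.mem_ker, Ideal.mem_comap, evalZero_succ_apply]
  exact Iff.rfl

lemma Mi_zero : Mi k 0 = ⊥ := by
  ext x
  simp only [Mi, RingHom.mem_ker, Ideal.mem_bot]
  exact Iff.rfl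

instance adicIter : ∀ N, IsAdicComplete (Mi k N) (IterPS k N)
  | 0 => (Mi_zero k).symm ▸ IsAdicComplete.bot (IterPS k 0)
  | n + 1 => by
    haveI := adicIter n
    exact (Mi_succ k n).symm ▸ WPrep.isAdicComplete_powerSeries (Mi k n)

lemma isUnit_of_evalZero_ne_zero : ∀ (N : ℕ) (x : IterPS k N),
    IterPS.evalZero k N x ≠ 0 → IsUnit x
  | 0, x, hx => isUnit_iff_ne_zero.mpr hx
  | n + 1, x, hx => by
    rw [show (x : IterPS k (n+1)) = (x : PowerSeries (IterPS k n)) from rfl]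
    exact (PowerSeries.isUnit_iff_constantCoeff (R := IterPS k n)).mpr
      (isUnit_of_evalZero_ne_zero n _ hx)

lemma evalZero_ne_zero_of_isUnit (N : ℕ) (x : IterPS k N) (hx : IsUnit x) :
    IterPS.evalZero k N x ≠ 0 := by
  obtain ⟨u, rfl⟩ := hx
  intro h
  have : (IterPS.evalZero k N) (↑u * ↑u⁻¹) = 1 := by rw [Units.mul_inv]; exact map_one _
  rw [map_mul, h, zero_mul] at this
  exact zero_ne_one this

end IterStuff


namespace WPrep

variable {R : Type*} [CommRing R]

lemma coeff_mul_low {e j : ℕ} {x y : PowerSeries R} (hx : ∀ a < e, coeff (R := R) a x = 0)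
    (hy : ∀ a < e, coeff (R := R) a y = 0) (hj : j < 2 * e) : coeff (R := R) j (x * y) = 0 := by
  rw [coeff_mul]
  refine Finset.sum_eq_zero fun p hp => ?_
  rw [Finset.HasAntidiagonal.mem_antidiagonal] at hp
  rcases Nat.lt_or_ge p.1 e with h | h
  · rw [hx p.1 h, zero_mul]
  · rw [hy p.2 (by omega), mul_zero]

lemma coeff_mul_two_e {e : ℕ} {x y : PowerSeries R} (hx : ∀ a < e, coeff (R := R) a x = 0)
    (hy : ∀ a < e, coeff (R := R) a y = 0) :
    coeff (R := R) (2 * e) (x * y) = coeff (R := R) e x * coeff (R := R) e y := by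
  rw [coeff_mul]
  rw [Finset.sum_eq_single (e, e)]
  · intro p hp hne
    rw [Finset.HasAntidiagonal.mem_antidiagonal] at hp
    rcases Nat.lt_or_ge p.1 e with h | h
    · rw [hx p.1 h, zero_mul]
    · have : p.2 < e := by
        rcases Nat.lt_or_ge p.2 e with h' | h'
        · exact h'
        · exfalso; apply hne; have h1 : p.1 = e := by omega
          have h2 : p.2 = e := by omega
          exact Prod.ext h1 h2
      rw [hy p.2 this, mul_zero]
  · intro h
    exact absurd (Finset.HasAntidiagonal.mem_antidiagonal.mpr (by omega)) h

lemma coeff_mul_right_low {d a : ℕ} {x y : PowerSeries R} (hy : ∀ v < d, coeff (R := R) v y = 0)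
    (ha : a < d) : coeff (R := R) a (x * y) = 0 := by
  rw [coeff_mul]
  refine Finset.sum_eq_zero fun p hp => ?_
  rw [Finset.HasAntidiagonal.mem_antidiagonal] at hp
  rw [hy p.2 (by omega), mul_zero]

end WPrep

noncomputable section MoreIter

open PowerSeries

variable (k : Type) [Field k]

lemma polyToPS_coe (n : ℕ) (p : Polynomial (IterPS k n)) :
    polyToPS k n p = (p : PowerSeries (IterPS k n)) :=
  Polynomial.coeToPowerSeries.ringHom_apply (φ := p)

lemma exists_sqrt (h2 : (2 : k) ≠ 0) (N : ℕ) (u : IterPS k N)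
    (hu : IterPS.evalZero k N u = 1) : ∃ s : IterPS k N, s ^ 2 = u := by
  haveI : IsAdicComplete (Mi k N) (IterPS k N) := adicIter k N
  set P : Polynomial (IterPS k N) := Polynomial.X ^ 2 - Polynomial.C u with hP
  have hmonic : P.Monic := Polynomial.monic_X_pow_sub_C u (by norm_num)
  have h₁ : P.eval 1 ∈ Mi k N := by
    have : P.eval 1 = 1 - u := by simp [hP]
    rw [this]
    simp only [Mi, RingHom.mem_ker, map_sub, map_one, hu, sub_self]
  have h₂ : IsUnit (Ideal.Quotient.mk (Mi k N) (P.derivative.eval 1)) := by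
    have hder : P.derivative.eval 1 = 2 := by
      simp [hP, Polynomial.derivative_X_pow, one_add_one_eq_two]
    rw [hder]
    refine IsUnit.map _ (isUnit_of_evalZero_ne_zero k N 2 ?_)
    rw [map_ofNat]
    exact_mod_cast h2
  obtain ⟨a, ha, -⟩ := HenselianRing.is_henselian P hmonic 1 h₁ h₂
  refine ⟨a, ?_⟩
  have : a ^ 2 - u = 0 := by simpa [hP, Polynomial.IsRoot] using ha
  linear_combination this

lemma sum_sq_ne_zero (m : ℕ) (hms : (m : ℕ∞) ≤ levelE k) (c : Fin m → k)
    (i₀ : Fin m) (hc : c i₀ ≠ 0) : ∑ i, c i ^ 2 ≠ 0 := by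
  intro h0
  have hm : m ≠ 0 := by rintro rfl; exact absurd i₀.2 (by omega)
  obtain ⟨m', rfl⟩ : ∃ m', m = m' + 1 := ⟨m - 1, by omega⟩
  have key : (-1 : k) = ∑ i : Fin m', (c (i₀.succAbove i) / c i₀) ^ 2 := by
    have h1 : ∑ i : Fin (m' + 1), (c i / c i₀) ^ 2 = 0 := by
      have : ∀ i : Fin (m' + 1), (c i / c i₀) ^ 2 = c i ^ 2 * (c i₀ ^ 2)⁻¹ := by
        intro i; rw [div_pow, div_eq_mul_inv]
      rw [Finset.sum_congr rfl fun i _ => this i, ← Finset.sum_mul, h0, zero_mul]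
    rw [Fin.sum_univ_succAbove (fun i => (c i / c i₀) ^ 2) i₀, div_self hc,
      one_pow] at h1
    linear_combination -h1
  have hsos : SumOfSquares m' (-1 : k) := ⟨fun i => c (i₀.succAbove i) / c i₀, key⟩
  have hlev : levelE k ≤ (m' : ℕ∞) := by
    refine iInf_le_of_le m' ?_
    exact iInf_le_of_le hsos le_rfl
  have hchain : ((m' + 1 : ℕ) : ℕ∞) ≤ ((m' : ℕ) : ℕ∞) := le_trans hms hlev
  have : m' + 1 ≤ m' := by exact_mod_cast hchain
  omega

end MoreIter

/-- **Statement 12.** Let `f ∈ Rₙ = k[[t₁,…,t_n]]` (here with `n = n' + 1 ≥ 1`, realized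
as `R_{n-1}[[t_n]]`) be regular in `t_n`, i.e. `f(0,…,0,t_n) ≠ 0`, and let `1 ≤ m ≤ s(k)`.
If `f` is a sum of `m` squares in `Rₙ`, then `f = a²·b` with `a ∈ Rₙ` and
`b ∈ R_{n−1}[t_n]` a sum of `m` squares in `R_{n−1}[t_n]`. -/
theorem stmt_12 (k : Type) [Field k] (h2 : (2 : k) ≠ 0) (n : ℕ)
    (f : IterPS k (n + 1))
    (hreg : PowerSeries.map (IterPS.evalZero k n)
      (show PowerSeries (IterPS k n) from f) ≠ 0)
    (m : ℕ) (hm : 1 ≤ m) (hms : (m : ℕ∞) ≤ levelE k)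
    (hf : SumOfSquares m f) :
    ∃ (a : IterPS k (n + 1)) (b : Polynomial (IterPS k n)),
      SumOfSquares m b ∧ f = a ^ 2 * polyToPS k n b := by
  classical
  obtain ⟨g, hg⟩ := hf
  set π : IterPS k n →+* k := IterPS.evalZero k n with hπ
  set F : PowerSeries (IterPS k n) := f with hFdef
  set G : Fin m → PowerSeries (IterPS k n) := fun i => g i with hGdef
  have hFG : F = ∑ i, G i ^ 2 := hg
  set fb : PowerSeries k := PowerSeries.map π F with hfbdef
  set gb : Fin m → PowerSeries k := fun i => PowerSeries.map π (G i) with hgbdef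
  have hfb : fb = ∑ i, gb i ^ 2 := by
    rw [hfbdef, hFG, map_sum]
    exact Finset.sum_congr rfl fun i _ => by rw [map_pow]
  have hreg' : fb ≠ 0 := hreg
  set S : Set ℕ := {j | ∃ i, PowerSeries.coeff (R := k) j (gb i) ≠ 0} with hSdef
  have hS : S.Nonempty := by
    by_contra hSe
    rw [Set.not_nonempty_iff_eq_empty] at hSe
    have hgb0 : ∀ i, gb i = 0 := by
      intro i
      ext j
      by_contra hj
      have hjS : j ∈ S := ⟨i, by simpa using hj⟩
      rw [hSe] at hjS
      exact hjS
    apply hreg'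
    rw [hfb]
    simp [hgb0]
  set e : ℕ := sInf S with he
  have he_lt : ∀ a, a < e → ∀ i, PowerSeries.coeff (R := k) a (gb i) = 0 := by
    intro a ha i
    by_contra h
    exact Nat.notMem_of_lt_sInf ha ⟨i, h⟩
  obtain ⟨i₀, hi₀⟩ : ∃ i, PowerSeries.coeff (R := k) e (gb i) ≠ 0 := Nat.sInf_mem hS
  set A : k := ∑ i, (PowerSeries.coeff (R := k) e (gb i)) ^ 2 with hA
  have hAne : A ≠ 0 := sum_sq_ne_zero k m hms _ i₀ hi₀
  have hfb_low : ∀ j, j < 2 * e → PowerSeries.coeff (R := k) j fb = 0 := by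
    intro j hj
    rw [hfb, map_sum]
    refine Finset.sum_eq_zero fun i _ => ?_
    rw [pow_two]
    exact WPrep.coeff_mul_low (fun a ha => he_lt a ha i) (fun a ha => he_lt a ha i) hj
  have hfb_2e : PowerSeries.coeff (R := k) (2 * e) fb = A := by
    rw [hfb, map_sum, hA]
    refine Finset.sum_congr rfl fun i _ => ?_
    rw [pow_two, WPrep.coeff_mul_two_e (fun a ha => he_lt a ha i)
      (fun a ha => he_lt a ha i), ← pow_two]
  rcases Nat.eq_zero_or_pos e with he0 | hepos
  · -- `e = 0` : `f` is a unit, take `b` the constant polynomial `∑ cᵢ²`.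
    set c : Fin m → IterPS k n := fun i => PowerSeries.constantCoeff (R := IterPS k n) (G i)
      with hcdef
    have hπc : ∀ i, π (c i) = PowerSeries.coeff (R := k) 0 (gb i) := by
      intro i
      rw [hgbdef]
      simp only [PowerSeries.coeff_map, hcdef]
      rw [PowerSeries.coeff_zero_eq_constantCoeff]
    set σR : IterPS k n := ∑ i, c i ^ 2 with hσR
    have hπσ : π σR = A := by
      rw [hσR, map_sum, hA]
      refine Finset.sum_congr rfl fun i _ => ?_
      rw [map_pow, hπc, he0]
    have hunit : IsUnit σR := by
      apply isUnit_of_evalZero_ne_zero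
      rw [show IterPS.evalZero k n σR = π σR from rfl, hπσ]
      exact hAne
    obtain ⟨V, hV⟩ := hunit.map (PowerSeries.C (R := IterPS k n))
    set VV : PowerSeries (IterPS k n) := ↑V with hVVdef
    set VI : PowerSeries (IterPS k n) := ↑V⁻¹ with hVIdef
    set c' : PowerSeries (IterPS k n) := F * VI with hc'
    have hfc' : c' * VV = F := by
      rw [hc', mul_assoc]
      rw [show VI * VV = 1 from V.inv_mul]
      rw [mul_one]
    have hezV : IterPS.evalZero k (n+1) VV = A := by
      rw [hV]
      show IterPS.evalZero k n (PowerSeries.constantCoeff (PowerSeries.C (R := IterPS k n) σR)) = A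
      rw [PowerSeries.constantCoeff_C]
      exact hπσ
    have hezF : IterPS.evalZero k (n+1) F = A := by
      rw [evalZero_succ_apply]
      have : π (PowerSeries.constantCoeff (R := IterPS k n) F) = PowerSeries.coeff (R := k) 0 fb := by
        rw [hfbdef, PowerSeries.coeff_map, PowerSeries.coeff_zero_eq_constantCoeff]
      have h2e : 2 * e = 0 := by omega
      rw [h2e] at hfb_2e
      rw [this]
      exact hfb_2e
    have hez : IterPS.evalZero k (n+1) c' = 1 := by
      have h1 : IterPS.evalZero k (n+1) c' * A = A := by
        have h := congrArg (IterPS.evalZero k (n+1)) hfc'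
        erw [map_mul, hezV, hezF] at h
        exact h
      exact mul_right_cancel₀ hAne (h1.trans (one_mul A).symm)
    obtain ⟨s, hs⟩ := exists_sqrt k h2 (n+1) c' hez
    refine ⟨s, ∑ i, (Polynomial.C (c i)) ^ 2, ⟨fun i => Polynomial.C (c i), rfl⟩, ?_⟩
    have hpoly : polyToPS k n (∑ i, (Polynomial.C (c i)) ^ 2)
        = PowerSeries.C (R := IterPS k n) σR := by
      rw [map_sum, hσR, map_sum]
      refine Finset.sum_congr rfl fun i _ => ?_
      rw [map_pow, polyToPS_coe, Polynomial.coe_C]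
      exact (map_pow _ _ _).symm
    rw [hpoly, ← hV, hs]
    exact (hfc'.symm : F = c' * VV)
  · -- `e ≥ 1` : use Weierstrass division by `F`.
    haveI : IsAdicComplete (Mi k n) (IterPS k n) := adicIter k n
    have hlow : ∀ j, j < 2 * e → PowerSeries.coeff (R := IterPS k n) j F ∈ Mi k n := by
      intro j hj
      have : π (PowerSeries.coeff (R := IterPS k n) j F) = 0 := by
        rw [← PowerSeries.coeff_map]
        exact hfb_low j hj
      exact this
    have hd : IsUnit (PowerSeries.coeff (R := IterPS k n) (2 * e) F) := by
      apply isUnit_of_evalZero_ne_zero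
      have : IterPS.evalZero k n (PowerSeries.coeff (R := IterPS k n) (2*e) F)
          = PowerSeries.coeff (R := k) (2*e) fb := by
        rw [hfbdef, PowerSeries.coeff_map]
      rw [this, hfb_2e]
      exact hAne
    have hdiv := fun i => WPrep.wdiv (I := Mi k n) (f := F) (d := 2*e)
      (fun j hj => hlow j hj) hd (G i)
    choose q r hqr using hdiv
    set b : Polynomial (IterPS k n) := ∑ i, (r i) ^ 2 with hb
    set c' : PowerSeries (IterPS k n) :=
      1 + ∑ i, (F * (q i) ^ 2 - 2 * (q i * G i)) with hc'
    set Ψ : Polynomial (IterPS k n) →+* PowerSeries (IterPS k n) :=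
      Polynomial.coeToPowerSeries.ringHom with hΨdef
    have hrGqF : ∀ i, ((r i : PowerSeries (IterPS k n))) = G i - q i * F := by
      intro i
      rw [hqr i]; ring
    have hσc : Ψ b = F * c' := by
      rw [hb, map_sum]
      have hterm : ∀ i ∈ Finset.univ, Ψ ((r i) ^ 2)
          = G i ^ 2 + F * (F * (q i) ^ 2 - 2 * (q i * G i)) := by
        intro i _
        rw [map_pow, hΨdef, Polynomial.coeToPowerSeries.ringHom_apply, hrGqF i]
        ring
      rw [Finset.sum_congr rfl hterm, Finset.sum_add_distrib, ← Finset.mul_sum, ← hFG, hc']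
      ring
    -- compute the residue of `c'`
    set rb : Fin m → PowerSeries k :=
      fun i => PowerSeries.map π ((r i : PowerSeries (IterPS k n))) with hrbdef
    have hrb : ∀ i, rb i = gb i - PowerSeries.map π (q i) * fb := by
      intro i
      have h := congrArg (PowerSeries.map π) (hrGqF i)
      rw [map_sub, map_mul] at h
      exact h
    have hrb_low : ∀ i, ∀ a, a < 2 * e →
        PowerSeries.coeff (R := k) a (rb i) = PowerSeries.coeff (R := k) a (gb i) := by
      intro i a ha
      rw [hrb i, map_sub, WPrep.coeff_mul_right_low (fun v hv => hfb_low v hv) ha, sub_zero]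
    have hσ2e : PowerSeries.coeff (R := k) (2 * e) (PowerSeries.map π (Ψ b)) = A := by
      rw [hb]
      rw [show PowerSeries.map π (Ψ (∑ i, (r i)^2))
          = ∑ i, (rb i) ^ 2 by
        rw [map_sum, map_sum]
        refine Finset.sum_congr rfl fun i _ => ?_
        rw [map_pow, map_pow, hΨdef, Polynomial.coeToPowerSeries.ringHom_apply]]
      rw [map_sum, hA]
      refine Finset.sum_congr rfl fun i _ => ?_
      have hlow' : ∀ a, a < e → PowerSeries.coeff (R := k) a (rb i) = 0 := by
        intro a ha
        rw [hrb_low i a (by omega)]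
        exact he_lt a ha i
      rw [pow_two, WPrep.coeff_mul_two_e hlow' hlow', hrb_low i e (by omega), ← pow_two]
    have hez : IterPS.evalZero k (n+1) c' = 1 := by
      have hmain : A = A * IterPS.evalZero k (n+1) c' := by
        have h1 := congrArg (PowerSeries.coeff (R := k) (2 * e))
          (congrArg (PowerSeries.map π) hσc)
        rw [hσ2e, map_mul, PowerSeries.coeff_mul] at h1
        rw [Finset.sum_eq_single ((2*e : ℕ), (0 : ℕ))] at h1
        · rw [show PowerSeries.coeff (R := k) (2*e) (PowerSeries.map π F) = A from hfb_2e] at h1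
          have hcz : PowerSeries.coeff (R := k) 0 (PowerSeries.map π c')
              = IterPS.evalZero k (n+1) c' := by
            rw [PowerSeries.coeff_map, PowerSeries.coeff_zero_eq_constantCoeff]
            rfl
          rw [hcz] at h1
          exact h1
        · intro p hp hne
          rw [Finset.HasAntidiagonal.mem_antidiagonal] at hp
          have hp1 : p.1 < 2 * e := by
            rcases Nat.lt_or_ge p.1 (2*e) with h | h
            · exact h
            · exfalso; exact hne (Prod.ext (by omega) (by omega))
          rw [show PowerSeries.coeff (R := k) p.1 (PowerSeries.map π F) = 0 from hfb_low p.1 hp1,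
            zero_mul]
        · intro hmem
          exact absurd (Finset.HasAntidiagonal.mem_antidiagonal.mpr (by omega)) hmem
      exact mul_left_cancel₀ hAne (by rw [mul_one, ← hmain])
    obtain ⟨s, hs⟩ := exists_sqrt k h2 (n+1) c' hez
    have hsu : IsUnit s := by
      apply isUnit_of_evalZero_ne_zero
      intro h0
      have : (IterPS.evalZero k (n+1) s) ^ 2 = 1 := by
        rw [← map_pow, hs, hez]
      rw [h0] at this
      simp at this
    obtain ⟨U, hU⟩ := hsu
    refine ⟨↑U⁻¹, b, ⟨r, hb⟩, ?_⟩
    have hP : polyToPS k n b = f * s ^ 2 := by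
      rw [hs]
      exact hσc
    rw [hP, ← hU]
    have h1 : (↑U⁻¹ : IterPS k (n + 1)) * ↑U = 1 := U.inv_mul
    linear_combination (-(f * ((↑U⁻¹ : IterPS k (n + 1)) * ↑U + 1))) * h1

end
end
end
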